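/- Under the standing hypotheses, fix for each e ∈ G₀ an enumeration X_e = {g_{1,e} = e, g_{2,e}, …, g_{n_e,e}} of X_e = {h ∈ G : r(h) = e}, and suppose G satisfies: for every l ∈ G and every 1 ≤ j ≤ n_{d(l)} = n_{r(l)}, if g_{j,r(l)}⁻¹ · l · g_{j,d(l)} ∈ G₀ then l ∈ G₀. If R is an α-partial Galois extension of R^α, then T is a β-Galois extension of T^β. -/

import Mathlib

universe u

/-- A groupoid in the algebraic sense of Lawson: a non-empty set `G` with a
partially defined binary operation (here modeled by a total operation `mul`
whose value is only constrained when it is defined, i.e. when `d g = r h`),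
an inversion `inv`, and domain/range maps `d`, `r`. -/
structure AlgGroupoid (G : Type u) where
  mul : G → G → G
  inv : G → G
  d : G → G
  r : G → G
  mul_assoc' : ∀ g h l, d g = r h → d h = r l → mul (mul g h) l = mul g (mul h l)
  mul_d : ∀ g, mul g (d g) = g
  r_mul : ∀ g, mul (r g) g = g
  inv_mul : ∀ g, mul (inv g) g = d g
  mul_inv : ∀ g, mul g (inv g) = r g
  d_mul : ∀ g h, d g = r h → d (mul g h) = d h
  r_mul' : ∀ g h, d g = r h → r (mul g h) = r g
  d_inv : ∀ g, d (inv g) = r g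
  r_inv : ∀ g, r (inv g) = d g
  inv_inv : ∀ g, inv (inv g) = g
  d_d : ∀ g, d (d g) = d g
  r_d : ∀ g, r (d g) = d g
  d_r : ∀ g, d (r g) = r g
  r_r : ∀ g, r (r g) = r g

/-- `e` is an identity element of the groupoid `𝔾`, i.e. an element of `G₀`. -/
def AlgGroupoid.isId {G : Type u} (𝔾 : AlgGroupoid G) (e : G) : Prop := 𝔾.d e = e

instance {G : Type u} [DecidableEq G] (𝔾 : AlgGroupoid G) (e : G) : Decidable (𝔾.isId e) :=
  inferInstanceAs (Decidable (𝔾.d e = e))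

/-- `D` is a two-sided ideal of `E` (both being subsets of an ambient
non-unital ring `T`). -/
structure IsIdealIn {T : Type u} [NonUnitalRing T] (D E : Set T) : Prop where
  subset : D ⊆ E
  zero_mem : (0 : T) ∈ D
  add_mem : ∀ ⦃x y : T⦄, x ∈ D → y ∈ D → x + y ∈ D
  neg_mem : ∀ ⦃x : T⦄, x ∈ D → -x ∈ D
  mul_mem_left : ∀ ⦃x y : T⦄, x ∈ E → y ∈ D → x * y ∈ D
  mul_mem_right : ∀ ⦃x y : T⦄, x ∈ D → y ∈ E → x * y ∈ D

/-- `u` is a (two-sided) multiplicative identity element of the subset `D`. -/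
def IsIdentityElem {T : Type u} [NonUnitalRing T] (u : T) (D : Set T) : Prop :=
  u ∈ D ∧ ∀ x ∈ D, u * x = x ∧ x * u = x

/-- A partial action `α = ({D_g}, {α_g})` of a groupoid `𝔾` on the ring whose
carrier is the subset `R` of the ambient non-unital ring `T` (take
`R = Set.univ` for a partial action on `T` itself).  For each `g`, `D (r g)`
is an ideal of `R`, `D g` is an ideal of `D (r g)` and `act g` restricts to a
ring isomorphism from `D (inv g)` onto `D g`; moreover `act e` is the identity
of `D e` for identities `e`, and for composable `g, h` the map `act (mul g h)`
extends `act g ∘ act h` (whose domain is `(act h)⁻¹ (D (inv g) ∩ D h)`). -/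
structure PartialGroupoidAction {G : Type u} (𝔾 : AlgGroupoid G) (T : Type u)
    [NonUnitalRing T] (R : Set T) where
  D : G → Set T
  act : G → T → T
  ideal_r : ∀ g, IsIdealIn (D (𝔾.r g)) R
  ideal : ∀ g, IsIdealIn (D g) (D (𝔾.r g))
  bijOn : ∀ g, Set.BijOn (act g) (D (𝔾.inv g)) (D g)
  map_add : ∀ g, ∀ x ∈ D (𝔾.inv g), ∀ y ∈ D (𝔾.inv g), act g (x + y) = act g x + act g y
  map_mul : ∀ g, ∀ x ∈ D (𝔾.inv g), ∀ y ∈ D (𝔾.inv g), act g (x * y) = act g x * act g y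
  act_id : ∀ e, 𝔾.isId e → ∀ x ∈ D e, act e x = x
  dom_cond : ∀ g h, 𝔾.d g = 𝔾.r h → ∀ x ∈ D (𝔾.inv h), act h x ∈ D (𝔾.inv g) →
    x ∈ D (𝔾.inv (𝔾.mul g h))
  comp_cond : ∀ g h, 𝔾.d g = 𝔾.r h → ∀ x ∈ D (𝔾.inv h), act h x ∈ D (𝔾.inv g) →
    act g (act h x) = act (𝔾.mul g h) x

/-- The partial action `α` is global if, for all composable `g, h`, the
composite `α_g ∘ α_h` (taken on its largest possible domain) coincides with
`α_{gh}`; since both maps always agree on the domain of the composite, this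
amounts to the equality of the two domains. -/
def PartialGroupoidAction.IsGlobal {G : Type u} {𝔾 : AlgGroupoid G} {T : Type u}
    [NonUnitalRing T] {R : Set T} (α : PartialGroupoidAction 𝔾 T R) : Prop :=
  ∀ g h, 𝔾.d g = 𝔾.r h →
    {x | x ∈ α.D (𝔾.inv h) ∧ α.act h x ∈ α.D (𝔾.inv g)} = α.D (𝔾.inv (𝔾.mul g h))

/-- **Theorem 5.1(ii)**: under the standing hypotheses, fix for each identity
`e ∈ G₀` an enumeration `g_{1,e} = e, g_{2,e}, …, g_{n_e,e}` of
`X_e = {h ∈ G : r(h) = e}` (here `en e j`, `j < n e`), and suppose that for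
every `l ∈ G` and every valid index `j`, `g_{j,r(l)}⁻¹ · l · g_{j,d(l)} ∈ G₀`
implies `l ∈ G₀`.  If `R` is an `α`-partial Galois extension of `R^α`, then
`T` is a `β`-Galois extension of `T^β`. -/
theorem list_sum_map_neg {M : Type*} [AddCommGroup M] (l : List M) :
    (l.map (fun z => -z)).sum = -l.sum := by
  induction l with
  | nil => simp
  | cons a t ih => simp only [List.map_cons, List.sum_cons, ih]; abel

theorem list_sum_map_flatMap {α β M : Type*} [AddCommMonoid M] (l : List α) (f : α → List β)
    (g : β → M) : ((l.flatMap f).map g).sum = (l.map fun a => ((f a).map g).sum).sum := by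
  induction l with
  | nil => simp
  | cons a t ih => simp [ih]

theorem sum_univ_get {β M : Type*} [AddCommMonoid M] (l : List β) (f : β → M) :
    (∑ j : Fin l.length, f (l.get j)) = (l.map f).sum := by
  have h1 : l.map f = List.ofFn (f ∘ l.get) := by
    rw [← List.map_ofFn, List.ofFn_get]
  rw [h1, List.sum_ofFn]
  rfl

theorem map_ofFn_sum {M N : Type*} [AddCommMonoid N] {m : ℕ} (f : Fin m → M) (g : M → N) :
    ((List.ofFn f).map g).sum = ∑ i : Fin m, g (f i) := by
  rw [List.map_ofFn, List.sum_ofFn]; rfl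

theorem finset_sum_toList {α M : Type*} [AddCommMonoid M] (s : Finset α) (f : α → M) :
    (s.toList.map f).sum = ∑ a ∈ s, f a := by
  rw [← Multiset.sum_coe, ← Multiset.map_coe, Finset.coe_toList]
  rfl

theorem partial_galois_to_global_galois {G : Type u} [Nonempty G] [Fintype G]
    [DecidableEq G] (𝔾 : AlgGroupoid G)
    {T : Type u} [Ring T] {Rset : Set T}
    (α : PartialGroupoidAction 𝔾 T Rset)
    (β : PartialGroupoidAction 𝔾 T (Set.univ : Set T)) (hglobal : β.IsGlobal)
    (hDE : ∀ e, 𝔾.isId e → IsIdealIn (α.D e) (β.D e))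
    (hcompatD : ∀ g, α.D g = α.D (𝔾.r g) ∩ (β.act g '' α.D (𝔾.d g)))
    (hcompatAct : ∀ g, ∀ a ∈ α.D (𝔾.inv g), β.act g a = α.act g a)
    (hspans : ∀ g, β.D g
      = ↑(AddSubgroup.closure (⋃ h ∈ {h : G | 𝔾.r h = 𝔾.r g}, β.act h '' α.D (𝔾.d h))))
    (oneD oneE : G → T)
    (honeD : ∀ g, IsIdentityElem (oneD g) (α.D g))
    (honeE : ∀ g, IsIdentityElem (oneE g) (β.D g))
    (hcentD : ∀ g (t : T), oneD g * t = t * oneD g)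
    (hcentE : ∀ g (t : T), oneE g * t = t * oneE g)
    (horthE : ∀ e f, 𝔾.isId e → 𝔾.isId f → e ≠ f → ∀ x ∈ β.D e, ∀ y ∈ β.D f, x * y = 0)
    (h1T : (1 : T) = ∑ e ∈ Finset.univ.filter (fun e => 𝔾.isId e), oneE e)
    (hRset : Rset
      = {x : T | ∃ t : T, x = t * ∑ e ∈ Finset.univ.filter (fun e => 𝔾.isId e), oneD e})
    (n : G → ℕ) (en : G → ℕ → G)
    (hen_r : ∀ e, 𝔾.isId e → ∀ j < n e, 𝔾.r (en e j) = e)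
    (hen_inj : ∀ e, 𝔾.isId e → Set.InjOn (en e) (Set.Iio (n e)))
    (hen_surj : ∀ e, 𝔾.isId e → ∀ h : G, 𝔾.r h = e → ∃ j < n e, en e j = h)
    (hen_zero : ∀ e, 𝔾.isId e → en e 0 = e)
    (hcond : ∀ l : G, ∀ j : ℕ, j < n (𝔾.r l) → j < n (𝔾.d l) →
      𝔾.isId (𝔾.mul (𝔾.mul (𝔾.inv (en (𝔾.r l) j)) l) (en (𝔾.d l) j)) → 𝔾.isId l)
    (m : ℕ) (x y : Fin m → T) (hxR : ∀ i, x i ∈ Rset) (hyR : ∀ i, y i ∈ Rset)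
    (hGalR : ∀ g : G,
      ∑ i, x i * α.act g (y i * oneD (𝔾.inv g)) = if 𝔾.isId g then oneD g else 0) :
    ∃ (k : ℕ) (as bs : Fin k → T), ∀ g : G,
      ∑ i, as i * β.act g (bs i * oneE (𝔾.inv g)) = if 𝔾.isId g then oneE g else 0 := by
  classical
  -- basic groupoid facts
  have isIdd : ∀ g, 𝔾.isId (𝔾.d g) := 𝔾.d_d
  have isIdr : ∀ g, 𝔾.isId (𝔾.r g) := 𝔾.d_r
  have hre : ∀ e, 𝔾.isId e → 𝔾.r e = e := by
    intro e he
    conv_lhs => rw [← he]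
    rw [𝔾.r_d, he]
  -- β domains depend only on the range
  have hβDr : ∀ g, β.D g = β.D (𝔾.r g) := by
    intro g; rw [hspans g, hspans (𝔾.r g), 𝔾.r_r]
  have hβinv : ∀ g, β.D (𝔾.inv g) = β.D (𝔾.d g) := by
    intro g; rw [hβDr (𝔾.inv g), 𝔾.r_inv]
  have hβIdeal : ∀ e, 𝔾.isId e → IsIdealIn (β.D e) (β.D e) := by
    intro e he; have h := β.ideal e; rwa [hre e he] at h
  have hαIdealR : ∀ e, 𝔾.isId e → IsIdealIn (α.D e) Rset := by
    intro e he; have h := α.ideal_r e; rwa [hre e he] at h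
  have hsubDE : ∀ e, 𝔾.isId e → α.D e ⊆ β.D e := fun e he => (hDE e he).subset
  have hβmem : ∀ (h : G) {t : T}, t ∈ β.D (𝔾.d h) → t ∈ β.D (𝔾.inv h) := by
    intro h t ht; rwa [hβinv]
  have hβmaps : ∀ (h : G) {t : T}, t ∈ β.D (𝔾.d h) → β.act h t ∈ β.D (𝔾.r h) := by
    intro h t ht
    have h2 := (β.bijOn h).mapsTo (hβmem h ht)
    rwa [hβDr h] at h2
  have hβzero : ∀ g, β.act g 0 = 0 := by
    intro g
    have h0 : (0:T) ∈ β.D (𝔾.inv g) := hβmem g (hβIdeal _ (isIdd g)).zero_mem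
    have h := β.map_add g 0 h0 0 h0
    rw [add_zero] at h
    exact right_eq_add.mp h
  have hβneg : ∀ (g : G) {t : T}, t ∈ β.D (𝔾.inv g) → β.act g (-t) = -β.act g t := by
    intro g t ht
    have hnt : -t ∈ β.D (𝔾.inv g) := by
      rw [hβinv] at ht ⊢; exact (hβIdeal _ (isIdd g)).neg_mem ht
    have h := β.map_add g t ht (-t) hnt
    rw [add_neg_cancel, hβzero g] at h
    exact eq_neg_of_add_eq_zero_right h.symm
  have honeMap : ∀ g, α.act g (oneD (𝔾.inv g)) = oneD g := by
    intro g
    obtain ⟨z, hz, hz2⟩ := (α.bijOn g).surjOn (honeD g).1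
    have hv : α.act g (oneD (𝔾.inv g)) ∈ α.D g := (α.bijOn g).mapsTo (honeD (𝔾.inv g)).1
    have h1 : α.act g (oneD (𝔾.inv g)) * oneD g = oneD g := by
      rw [← hz2, ← α.map_mul g _ (honeD (𝔾.inv g)).1 z hz, ((honeD (𝔾.inv g)).2 z hz).1]
    have h2 : oneD g * α.act g (oneD (𝔾.inv g)) = α.act g (oneD (𝔾.inv g)) :=
      ((honeD g).2 _ hv).1
    calc α.act g (oneD (𝔾.inv g)) = oneD g * α.act g (oneD (𝔾.inv g)) := h2.symm
      _ = α.act g (oneD (𝔾.inv g)) * oneD g := hcentD g _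
      _ = oneD g := h1
  have hβsum : ∀ (h : G) (f : Fin m → T), (∀ i, f i ∈ β.D (𝔾.d h)) →
      β.act h (∑ i, f i) = ∑ i, β.act h (f i) := by
    intro h f hf
    have hI := hβIdeal _ (isIdd h)
    have key : ∀ s : Finset (Fin m), ((∑ i ∈ s, f i) ∈ β.D (𝔾.d h)) ∧
        β.act h (∑ i ∈ s, f i) = ∑ i ∈ s, β.act h (f i) := by
      intro s
      induction s using Finset.cons_induction with
      | empty => exact ⟨by simpa using hI.zero_mem, by simpa using hβzero h⟩
      | cons a s ha ih =>
        rw [Finset.sum_cons, Finset.sum_cons]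
        exact ⟨hI.add_mem (hf a) ih.1,
          by rw [β.map_add h _ (hβmem h (hf a)) _ (hβmem h ih.1), ih.2]⟩
    exact (key Finset.univ).2
  have hxu : ∀ (h : G) (i : Fin m), x i * oneD (𝔾.d h) ∈ α.D (𝔾.d h) := fun h i =>
    (hαIdealR _ (isIdd h)).mul_mem_left (hxR i) (honeD _).1
  have hyu : ∀ (h : G) (i : Fin m), y i * oneD (𝔾.d h) ∈ α.D (𝔾.d h) := fun h i =>
    (hαIdealR _ (isIdd h)).mul_mem_left (hyR i) (honeD _).1
  -- THE KEY LEMMA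
  have key : ∀ (g h : G),
      (∑ i : Fin m, β.act h (x i * oneD (𝔾.d h)) *
        β.act g (β.act h (y i * oneD (𝔾.d h)) * oneE (𝔾.inv g)))
      = if 𝔾.isId g ∧ 𝔾.r h = g then β.act h (oneD (𝔾.d h)) else 0 := by
    intro g h
    have hX : ∀ i, β.act h (x i * oneD (𝔾.d h)) ∈ β.D (𝔾.r h) := fun i =>
      hβmaps h (hsubDE _ (isIdd h) (hxu h i))
    have hY : ∀ i, β.act h (y i * oneD (𝔾.d h)) ∈ β.D (𝔾.r h) := fun i =>
      hβmaps h (hsubDE _ (isIdd h) (hyu h i))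
    by_cases h1 : 𝔾.r h = 𝔾.d g
    · by_cases h2 : 𝔾.d g = 𝔾.r g
      · -- main case
        set k := 𝔾.mul (𝔾.mul (𝔾.inv h) g) h with hkdef
        have c1 : 𝔾.d (𝔾.inv h) = 𝔾.r g := by rw [𝔾.d_inv, h1, h2]
        have c2 : 𝔾.d (𝔾.mul (𝔾.inv h) g) = 𝔾.r h := by rw [𝔾.d_mul _ _ c1, ← h1]
        have c3 : 𝔾.r (𝔾.mul (𝔾.inv h) g) = 𝔾.d h := by rw [𝔾.r_mul' _ _ c1, 𝔾.r_inv]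
        have hrk : 𝔾.r k = 𝔾.d h := by rw [hkdef, 𝔾.r_mul' _ _ c2, c3]
        have hdk : 𝔾.d k = 𝔾.d h := by rw [hkdef, 𝔾.d_mul _ _ c2]
        have hk : 𝔾.mul h k = 𝔾.mul g h := by
          have a2 : 𝔾.mul h (𝔾.mul (𝔾.inv h) g) = 𝔾.mul (𝔾.mul h (𝔾.inv h)) g :=
            (𝔾.mul_assoc' h (𝔾.inv h) g (𝔾.r_inv h).symm c1).symm
          have a3 : 𝔾.mul (𝔾.mul h (𝔾.inv h)) g = g := by
            rw [𝔾.mul_inv h, h1, h2, 𝔾.r_mul g]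
          calc 𝔾.mul h k = 𝔾.mul (𝔾.mul h (𝔾.mul (𝔾.inv h) g)) h :=
                (𝔾.mul_assoc' h (𝔾.mul (𝔾.inv h) g) h c3.symm c2).symm
            _ = 𝔾.mul g h := by rw [a2, a3]
        -- membership facts
        have hwdh : oneD (𝔾.inv k) ∈ α.D (𝔾.d h) := by
          have hw := (α.ideal (𝔾.inv k)).subset (honeD (𝔾.inv k)).1
          rwa [𝔾.r_inv, hdk] at hw
        have hwinvk : oneD (𝔾.inv k) ∈ β.D (𝔾.inv k) := by
          apply hβmem k
          rw [hdk]
          exact hsubDE _ (isIdd h) hwdh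
        have hvk : β.act k (oneD (𝔾.inv k)) = oneD k := by
          rw [hcompatAct k _ (honeD (𝔾.inv k)).1, honeMap k]
        have hkmem : oneD k ∈ α.D (𝔾.d h) := by
          have hh := (α.ideal k).subset (honeD k).1
          rwa [hrk] at hh
        have huw : oneD (𝔾.d h) * oneD (𝔾.inv k) = oneD (𝔾.inv k) :=
          ((honeD (𝔾.d h)).2 _ hwdh).1
        have hKi : ∀ i, y i * oneD (𝔾.inv k) ∈ α.D (𝔾.inv k) := by
          intro i
          have h5 : (y i * oneD (𝔾.d h)) * oneD (𝔾.inv k) ∈ α.D (𝔾.inv k) :=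
            (α.ideal (𝔾.inv k)).mul_mem_left
              (by rw [𝔾.r_inv, hdk]; exact hyu h i) (honeD (𝔾.inv k)).1
          rwa [mul_assoc, huw] at h5
        have hterm : ∀ i : Fin m,
            β.act h (x i * oneD (𝔾.d h)) *
              β.act g (β.act h (y i * oneD (𝔾.d h)) * oneE (𝔾.inv g))
            = β.act h (x i * α.act k (y i * oneD (𝔾.inv k))) := by
          intro i
          have hYdg : β.act h (y i * oneD (𝔾.d h)) ∈ β.D (𝔾.inv g) := by
            rw [hβinv g, ← h1]; exact hY i
          have e1 : β.act h (y i * oneD (𝔾.d h)) * oneE (𝔾.inv g)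
              = β.act h (y i * oneD (𝔾.d h)) := ((honeE (𝔾.inv g)).2 _ hYdg).2
          have hyuinv : y i * oneD (𝔾.d h) ∈ β.D (𝔾.inv h) :=
            hβmem h (hsubDE _ (isIdd h) (hyu h i))
          have e2 : β.act g (β.act h (y i * oneD (𝔾.d h)))
              = β.act (𝔾.mul g h) (y i * oneD (𝔾.d h)) :=
            β.comp_cond g h h1.symm _ hyuinv hYdg
          have hyuinvk : y i * oneD (𝔾.d h) ∈ β.D (𝔾.inv k) :=
            hβmem k (by rw [hdk]; exact hsubDE _ (isIdd h) (hyu h i))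
          have hzmem : β.act k (y i * oneD (𝔾.d h)) ∈ β.D (𝔾.d h) := by
            have hz := hβmaps k (show y i * oneD (𝔾.d h) ∈ β.D (𝔾.d k) by
              rw [hdk]; exact hsubDE _ (isIdd h) (hyu h i))
            rwa [hrk] at hz
          have e3 : β.act h (β.act k (y i * oneD (𝔾.d h)))
              = β.act (𝔾.mul h k) (y i * oneD (𝔾.d h)) :=
            β.comp_cond h k hrk.symm _ hyuinvk (hβmem h hzmem)
          have e4 : β.act g (β.act h (y i * oneD (𝔾.d h)))
              = β.act h (β.act k (y i * oneD (𝔾.d h))) := by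
            rw [e2, e3, hk]
          -- algebra inside E_{d h}
          have hA : oneD (𝔾.d h) * β.act k (y i * oneD (𝔾.d h)) ∈ α.D (𝔾.d h) :=
            (hDE _ (isIdd h)).mul_mem_right (honeD _).1 hzmem
          have hukmem : oneD (𝔾.d h) ∈ β.D k := by
            rw [hβDr k, hrk]; exact hsubDE _ (isIdd h) (honeD _).1
          obtain ⟨u', hu', huu⟩ := (β.bijOn k).surjOn hukmem
          have hu'dk : u' ∈ β.D (𝔾.d k) := by rwa [← hβinv k]
          have hB : oneD (𝔾.d h) * β.act k (y i * oneD (𝔾.d h))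
              = β.act k (u' * (y i * oneD (𝔾.d h))) := by
            rw [β.map_mul k u' hu' (y i * oneD (𝔾.d h)) hyuinvk, huu]
          have hu'y : u' * (y i * oneD (𝔾.d h)) ∈ α.D (𝔾.d k) :=
            (hDE _ (isIdd k)).mul_mem_left hu'dk (by rw [hdk]; exact hyu h i)
          have hC : oneD (𝔾.d h) * β.act k (y i * oneD (𝔾.d h)) ∈ α.D k := by
            rw [hcompatD k]
            exact ⟨by rw [hrk]; exact hA, ⟨u' * (y i * oneD (𝔾.d h)), hu'y, hB.symm⟩⟩
          have hvu : oneD k * oneD (𝔾.d h) = oneD k := ((honeD (𝔾.d h)).2 _ hkmem).2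
          have hF : oneD (𝔾.d h) * β.act k (y i * oneD (𝔾.d h))
              = oneD k * β.act k (y i * oneD (𝔾.d h)) := by
            have hD' : oneD k * (oneD (𝔾.d h) * β.act k (y i * oneD (𝔾.d h)))
                = oneD (𝔾.d h) * β.act k (y i * oneD (𝔾.d h)) := ((honeD k).2 _ hC).1
            rw [← hD', ← mul_assoc, hvu]
          have hG : oneD (𝔾.d h) * β.act k (y i * oneD (𝔾.d h))
              = β.act k (oneD (𝔾.inv k) * (y i * oneD (𝔾.d h))) := by
            rw [hF, ← hvk, ← β.map_mul k _ hwinvk _ hyuinvk]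
          have hJ : oneD (𝔾.inv k) * (y i * oneD (𝔾.d h)) = y i * oneD (𝔾.inv k) := by
            rw [hcentD (𝔾.inv k) (y i * oneD (𝔾.d h)), mul_assoc, huw]
          have hL : oneD (𝔾.d h) * β.act k (y i * oneD (𝔾.d h))
              = α.act k (y i * oneD (𝔾.inv k)) := by
            rw [hG, hJ, hcompatAct k _ (hKi i)]
          rw [e1, e4,
            ← β.map_mul h (x i * oneD (𝔾.d h)) (hβmem h (hsubDE _ (isIdd h) (hxu h i)))
              (β.act k (y i * oneD (𝔾.d h))) (hβmem h hzmem),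
            mul_assoc, hL]
        have hmem2 : ∀ i : Fin m, x i * α.act k (y i * oneD (𝔾.inv k)) ∈ β.D (𝔾.d h) := by
          intro i
          have ha : α.act k (y i * oneD (𝔾.inv k)) ∈ α.D (𝔾.d h) := by
            have hb := (α.ideal k).subset ((α.bijOn k).mapsTo (hKi i))
            rwa [hrk] at hb
          exact hsubDE _ (isIdd h) ((hαIdealR _ (isIdd h)).mul_mem_left (hxR i) ha)
        calc (∑ i : Fin m, β.act h (x i * oneD (𝔾.d h)) *
              β.act g (β.act h (y i * oneD (𝔾.d h)) * oneE (𝔾.inv g)))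
            = ∑ i : Fin m, β.act h (x i * α.act k (y i * oneD (𝔾.inv k))) :=
              Finset.sum_congr rfl (fun i _ => hterm i)
          _ = β.act h (∑ i : Fin m, x i * α.act k (y i * oneD (𝔾.inv k))) :=
              (hβsum h _ hmem2).symm
          _ = β.act h (if 𝔾.isId k then oneD k else 0) := by rw [hGalR k]
          _ = if 𝔾.isId g ∧ 𝔾.r h = g then β.act h (oneD (𝔾.d h)) else 0 := by
              by_cases hg : 𝔾.isId g
              · have hgrh : 𝔾.r h = g := h1.trans hg
                have hm1 : 𝔾.mul (𝔾.inv h) g = 𝔾.inv h := by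
                  conv_lhs => rw [← hgrh, ← 𝔾.d_inv h]
                  exact 𝔾.mul_d (𝔾.inv h)
                have hkid : k = 𝔾.d h := by rw [hkdef, hm1, 𝔾.inv_mul]
                rw [hkid, if_pos (isIdd h), if_pos ⟨hg, hgrh⟩]
              · have hkn : ¬ 𝔾.isId k := by
                  intro hik
                  obtain ⟨j, hj, hje⟩ := hen_surj (𝔾.r g) (isIdr g) h (by rw [h1, h2])
                  exact hg (hcond g j hj (by rw [h2]; exact hj)
                    (by rw [hje, h2, hje]; exact hkdef ▸ hik))
                rw [if_neg hkn, hβzero h, if_neg (fun hc => hg hc.1)]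
      · -- r h = d g but d g ≠ r g
        have hrhs : ¬(𝔾.isId g ∧ 𝔾.r h = g) := by
          rintro ⟨hg, hr⟩
          exact h2 (hg.trans (hre g hg).symm)
        rw [if_neg hrhs]
        apply Finset.sum_eq_zero
        intro i _
        have hYdg : β.act h (y i * oneD (𝔾.d h)) ∈ β.D (𝔾.inv g) := by
          rw [hβinv g, ← h1]; exact hY i
        rw [((honeE (𝔾.inv g)).2 _ hYdg).2]
        have hgY : β.act g (β.act h (y i * oneD (𝔾.d h))) ∈ β.D (𝔾.r g) := by
          apply hβmaps g
          rw [← hβinv g]; exact hYdg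
        exact horthE (𝔾.d g) (𝔾.r g) (isIdd g) (isIdr g) h2 _ (by rw [← h1]; exact hX i) _ hgY
    · -- r h ≠ d g
      have hrhs : ¬(𝔾.isId g ∧ 𝔾.r h = g) := by
        rintro ⟨hg, hr⟩
        exact h1 (hr.trans hg.symm)
      rw [if_neg hrhs]
      apply Finset.sum_eq_zero
      intro i _
      have h5 : β.act h (y i * oneD (𝔾.d h)) * oneE (𝔾.inv g) = 0 :=
        horthE (𝔾.r h) (𝔾.d g) (isIdr h) (isIdd g) h1 _ (hY i) _
          (hβinv g ▸ (honeE (𝔾.inv g)).1)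
      rw [h5, hβzero g, mul_zero]
  -- decomposition of the identity elements of T
  have hdecomp : ∀ e, 𝔾.isId e → ∃ L : List (G × T),
      (∀ p ∈ L, 𝔾.r p.1 = e ∧ p.2 ∈ α.D (𝔾.d p.1)) ∧
      (L.map fun p => β.act p.1 p.2).sum = oneE e := by
    intro e he
    have h1 : oneE e ∈ AddSubgroup.closure
        (⋃ h ∈ {h : G | 𝔾.r h = 𝔾.r e}, β.act h '' α.D (𝔾.d h)) := by
      have hm := (honeE e).1
      rw [hspans e] at hm
      exact hm
    refine AddSubgroup.closure_induction ?_ ?_ ?_ ?_ h1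
    · intro z hz
      simp only [Set.mem_iUnion, Set.mem_setOf_eq] at hz
      obtain ⟨h₀, hh₀, c, hc, hcz⟩ := hz
      exact ⟨[(h₀, c)], by simp [hh₀, hre e he, hc], by simp [hcz]⟩
    · exact ⟨[], by simp, by simp⟩
    · rintro z1 z2 _ _ ⟨L1, hL1, hs1⟩ ⟨L2, hL2, hs2⟩
      refine ⟨L1 ++ L2, ?_, by rw [List.map_append, List.sum_append, hs1, hs2]⟩
      intro p hp
      rcases List.mem_append.mp hp with h' | h'
      · exact hL1 p h'
      · exact hL2 p h'
    · rintro z _ ⟨L, hL, hs⟩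
      refine ⟨L.map (fun p => (p.1, -p.2)), ?_, ?_⟩
      · intro p hp
        rw [List.mem_map] at hp
        obtain ⟨q, hq, rfl⟩ := hp
        exact ⟨(hL q hq).1, (hαIdealR _ (isIdd q.1)).neg_mem (hL q hq).2⟩
      · rw [List.map_map, ← hs]
        have hcg : ∀ p ∈ L, ((fun p : G × T => β.act p.1 p.2) ∘ fun p : G × T => (p.1, -p.2)) p
            = (Neg.neg ∘ fun p : G × T => β.act p.1 p.2) p := by
          intro p hp
          simp only [Function.comp_apply]
          exact hβneg p.1 (hβmem p.1 (hsubDE _ (isIdd p.1) (hL p hp).2))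
        rw [List.map_congr_left hcg, ← List.map_map, list_sum_map_neg, hs]
  -- choice of decompositions
  have hdecomp' : ∀ e : G, ∃ L : List (G × T), 𝔾.isId e →
      (∀ p ∈ L, 𝔾.r p.1 = e ∧ p.2 ∈ α.D (𝔾.d p.1)) ∧
      (L.map fun p => β.act p.1 p.2).sum = oneE e := by
    intro e
    by_cases he : 𝔾.isId e
    · obtain ⟨L, hL⟩ := hdecomp e he
      exact ⟨L, fun _ => hL⟩
    · exact ⟨[], fun h => absurd h he⟩
  choose Ffun hFfun using hdecomp'
  set idL : List G := (Finset.univ.filter fun e => 𝔾.isId e).toList with hidL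
  have hidmem : ∀ e ∈ idL, 𝔾.isId e := by
    intro e he
    rw [hidL, Finset.mem_toList, Finset.mem_filter] at he
    exact he.2
  set L : List (G × T) := idL.flatMap Ffun with hLdef
  have hLmem : ∀ p ∈ L, p.2 ∈ α.D (𝔾.d p.1) := by
    intro p hp
    rw [hLdef, List.mem_flatMap] at hp
    obtain ⟨e, he, hpe⟩ := hp
    exact ((hFfun e (hidmem e he)).1 p hpe).2
  set LP : List (T × T) := L.flatMap (fun p => List.ofFn (fun i : Fin m =>
    (β.act p.1 p.2 * β.act p.1 (x i * oneD (𝔾.d p.1)),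
      β.act p.1 (y i * oneD (𝔾.d p.1))))) with hLPdef
  refine ⟨LP.length, fun j => (LP.get j).1, fun j => (LP.get j).2, ?_⟩
  intro g
  have hterm2 : ∀ p : G × T, p.2 ∈ α.D (𝔾.d p.1) →
      (∑ i : Fin m, (β.act p.1 p.2 * β.act p.1 (x i * oneD (𝔾.d p.1))) *
        β.act g (β.act p.1 (y i * oneD (𝔾.d p.1)) * oneE (𝔾.inv g)))
      = if 𝔾.isId g ∧ 𝔾.r p.1 = g then β.act p.1 p.2 else 0 := by
    intro p hp
    have e0 : (∑ i : Fin m, (β.act p.1 p.2 * β.act p.1 (x i * oneD (𝔾.d p.1))) *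
        β.act g (β.act p.1 (y i * oneD (𝔾.d p.1)) * oneE (𝔾.inv g)))
        = β.act p.1 p.2 * ∑ i : Fin m, β.act p.1 (x i * oneD (𝔾.d p.1)) *
          β.act g (β.act p.1 (y i * oneD (𝔾.d p.1)) * oneE (𝔾.inv g)) := by
      rw [Finset.mul_sum]
      exact Finset.sum_congr rfl fun i _ => mul_assoc _ _ _
    rw [e0, key g p.1]
    by_cases hc : 𝔾.isId g ∧ 𝔾.r p.1 = g
    · rw [if_pos hc, if_pos hc,
        ← β.map_mul p.1 p.2 (hβmem p.1 (hsubDE _ (isIdd p.1) hp)) _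
          (hβmem p.1 (hsubDE _ (isIdd p.1) (honeD _).1)),
        ((honeD (𝔾.d p.1)).2 _ hp).2]
    · rw [if_neg hc, if_neg hc, mul_zero]
  have step1 : (∑ j : Fin LP.length,
      (LP.get j).1 * β.act g ((LP.get j).2 * oneE (𝔾.inv g)))
      = (LP.map fun q : T × T => q.1 * β.act g (q.2 * oneE (𝔾.inv g))).sum :=
    sum_univ_get LP (fun q : T × T => q.1 * β.act g (q.2 * oneE (𝔾.inv g)))
  refine step1.trans ?_
  rw [hLPdef, list_sum_map_flatMap]
  have hmapeq : L.map (fun p => (((List.ofFn (fun i : Fin m =>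
      (β.act p.1 p.2 * β.act p.1 (x i * oneD (𝔾.d p.1)),
        β.act p.1 (y i * oneD (𝔾.d p.1))))).map
        (fun q : T × T => q.1 * β.act g (q.2 * oneE (𝔾.inv g)))).sum))
      = L.map (fun p => if 𝔾.isId g ∧ 𝔾.r p.1 = g then β.act p.1 p.2 else 0) := by
    apply List.map_congr_left
    intro p hp
    rw [map_ofFn_sum]
    exact hterm2 p (hLmem p hp)
  rw [hmapeq, hLdef]
  have main : ∀ (l : List G), (∀ e ∈ l, 𝔾.isId e) →
      ((l.flatMap Ffun).map fun p => if 𝔾.isId g ∧ 𝔾.r p.1 = g then β.act p.1 p.2 else 0).sum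
      = (l.map fun e => if 𝔾.isId g ∧ e = g then oneE e else 0).sum := by
    intro l
    induction l with
    | nil => intro _; simp
    | cons e t ih =>
      intro hl
      rw [List.flatMap_cons, List.map_append, List.sum_append,
        List.map_cons, List.sum_cons, ih (fun e' he' => hl e' (List.mem_cons_of_mem _ he'))]
      congr 1
      have he := hl e List.mem_cons_self
      obtain ⟨hprop, hsum⟩ := hFfun e he
      by_cases hc : 𝔾.isId g ∧ e = g
      · rw [if_pos hc, ← hsum]
        apply congrArg List.sum
        apply List.map_congr_left
        intro p hp
        rw [if_pos ⟨hc.1, by rw [(hprop p hp).1, hc.2]⟩]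
      · rw [if_neg hc]
        apply List.sum_eq_zero
        intro q hq
        rw [List.mem_map] at hq
        obtain ⟨p, hp, rfl⟩ := hq
        rw [if_neg]
        rintro ⟨h1', h2'⟩
        exact hc ⟨h1', by rw [← (hprop p hp).1, h2']⟩
  rw [main idL hidmem]
  by_cases hg : 𝔾.isId g
  · have hmap2 : idL.map (fun e => if 𝔾.isId g ∧ e = g then oneE e else 0)
        = idL.map (fun e => if e = g then oneE e else 0) := by
      apply List.map_congr_left
      intro e _
      by_cases h : e = g
      · rw [if_pos ⟨hg, h⟩, if_pos h]
      · rw [if_neg (fun hc => h hc.2), if_neg h]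
    rw [hmap2, hidL, finset_sum_toList, Finset.sum_ite_eq', if_pos (by
      rw [Finset.mem_filter]; exact ⟨Finset.mem_univ g, hg⟩), if_pos hg]
  · rw [if_neg hg]
    apply List.sum_eq_zero
    intro z hz
    rw [List.mem_map] at hz
    obtain ⟨e, _, rfl⟩ := hz
    exact if_neg (fun hc => hg hc.1)
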